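/- arXiv:0901.4923 — 11 statements merged into one kernel-verified Lean document; each statement's English description precedes it below -/
import Mathlib

section
/- Let Γ be a simple graph of order n and minimum degree δ, and let k be an integer with -δ ≤ k ≤ δ such that Γ is partitionable into defensive k-alliances. Then ψ_k^d(Γ) ≤ ⌊2n/(δ+k+2)⌋ if δ+k is even, and ψ_k^d(Γ) ≤ ⌊2n/(δ+k+3)⌋ if δ+k is odd. -/
open Finset

/-- The number of neighbors that the vertex `v` has inside the set `S`. -/
def degIn {V : Type*} [Fintype V] [DecidableEq V] (G : SimpleGraph V) [DecidableRel G.Adj]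
    (S : Finset V) (v : V) : ℕ :=
  (S.filter fun u => G.Adj v u).card

/-- `S` is a defensive `k`-alliance: `S` is nonempty and every vertex of `S` has at least
`k` more neighbors inside `S` than outside. -/
def IsDefensiveAlliance {V : Type*} [Fintype V] [DecidableEq V] (G : SimpleGraph V)
    [DecidableRel G.Adj] (k : ℤ) (S : Finset V) : Prop :=
  S.Nonempty ∧ ∀ v ∈ S, (degIn G Sᶜ v : ℤ) + k ≤ (degIn G S v : ℤ)

/-- `S` is a dominating set: every vertex outside `S` has a neighbor in `S`. -/
def IsDominatingSet {V : Type*} [Fintype V] [DecidableEq V] (G : SimpleGraph V)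
    (S : Finset V) : Prop :=
  ∀ v ∉ S, ∃ u ∈ S, G.Adj v u

/-- A global defensive `k`-alliance is a defensive `k`-alliance which is a dominating set. -/
def IsGlobalDefensiveAlliance {V : Type*} [Fintype V] [DecidableEq V] (G : SimpleGraph V)
    [DecidableRel G.Adj] (k : ℤ) (S : Finset V) : Prop :=
  IsDefensiveAlliance G k S ∧ IsDominatingSet G S

/-- The defensive `k`-alliance number: the minimum cardinality of a defensive `k`-alliance. -/
noncomputable def defAllianceNum {V : Type*} [Fintype V] [DecidableEq V] (G : SimpleGraph V)
    [DecidableRel G.Adj] (k : ℤ) : ℕ :=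
  sInf {s : ℕ | ∃ S : Finset V, IsDefensiveAlliance G k S ∧ S.card = s}

/-- The global defensive `k`-alliance number. -/
noncomputable def globalDefAllianceNum {V : Type*} [Fintype V] [DecidableEq V] (G : SimpleGraph V)
    [DecidableRel G.Adj] (k : ℤ) : ℕ :=
  sInf {s : ℕ | ∃ S : Finset V, IsGlobalDefensiveAlliance G k S ∧ S.card = s}

/-- A partition of the vertex set all whose parts are defensive `k`-alliances. -/
def IsDefAlliancePartition {V : Type*} [Fintype V] [DecidableEq V] (G : SimpleGraph V)
    [DecidableRel G.Adj] (k : ℤ) (P : Finpartition (univ : Finset V)) : Prop :=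
  ∀ S ∈ P.parts, IsDefensiveAlliance G k S

/-- A partition of the vertex set all whose parts are global defensive `k`-alliances. -/
def IsGlobalDefAlliancePartition {V : Type*} [Fintype V] [DecidableEq V] (G : SimpleGraph V)
    [DecidableRel G.Adj] (k : ℤ) (P : Finpartition (univ : Finset V)) : Prop :=
  ∀ S ∈ P.parts, IsGlobalDefensiveAlliance G k S

/-- The defensive `k`-alliance partition number `ψₖᵈ`. -/
noncomputable def defPartitionNum {V : Type*} [Fintype V] [DecidableEq V] (G : SimpleGraph V)
    [DecidableRel G.Adj] (k : ℤ) : ℕ :=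
  sSup {r : ℕ | ∃ P : Finpartition (univ : Finset V),
    IsDefAlliancePartition G k P ∧ P.parts.card = r}

/-- The global defensive `k`-alliance partition number `ψₖᵍᵈ`. -/
noncomputable def globalDefPartitionNum {V : Type*} [Fintype V] [DecidableEq V]
    (G : SimpleGraph V) [DecidableRel G.Adj] (k : ℤ) : ℕ :=
  sSup {r : ℕ | ∃ P : Finpartition (univ : Finset V),
    IsGlobalDefAlliancePartition G k P ∧ P.parts.card = r}

/-- If `Γ` (of order `n`, minimum degree `δ`) is partitionable into defensive `k`-alliances,
`-δ ≤ k ≤ δ`, then `ψₖᵈ(Γ) ≤ ⌊2n/(δ+k+2)⌋` when `δ+k` is even, and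
`ψₖᵈ(Γ) ≤ ⌊2n/(δ+k+3)⌋` when `δ+k` is odd. -/
theorem statement0 {V : Type*} [Fintype V] [DecidableEq V] [Nonempty V]
    (G : SimpleGraph V) [DecidableRel G.Adj] (k : ℤ)
    (hk₁ : -(G.minDegree : ℤ) ≤ k) (hk₂ : k ≤ (G.minDegree : ℤ))
    (hpart : 2 ≤ defPartitionNum G k) :
    (Even ((G.minDegree : ℤ) + k) →
      (defPartitionNum G k : ℤ) ≤ 2 * (Fintype.card V : ℤ) / ((G.minDegree : ℤ) + k + 2)) ∧
    (Odd ((G.minDegree : ℤ) + k) →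
      (defPartitionNum G k : ℤ) ≤ 2 * (Fintype.card V : ℤ) / ((G.minDegree : ℤ) + k + 3)) := by
  classical
  set δ : ℤ := (G.minDegree : ℤ) with hδ
  -- every defensive k-alliance S satisfies δ + k + 2 ≤ 2 * S.card
  have key : ∀ S : Finset V, IsDefensiveAlliance G k S → δ + k + 2 ≤ 2 * (S.card : ℤ) := by
    intro S ⟨⟨v, hv⟩, hS⟩
    have hsplit : degIn G S v + degIn G Sᶜ v = G.degree v := by
      unfold degIn
      rw [← Finset.card_union_of_disjoint, ← Finset.filter_union, Finset.union_compl,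
        SimpleGraph.degree, SimpleGraph.neighborFinset_eq_filter]
      exact Finset.disjoint_filter_filter (disjoint_compl_right)
    have hmin : δ ≤ (G.degree v : ℤ) := by
      rw [hδ]; exact_mod_cast G.minDegree_le_degree v
    have hin : (degIn G S v : ℤ) + 1 ≤ (S.card : ℤ) := by
      have hsub : insert v (S.filter fun u => G.Adj v u) ⊆ S := by
        intro x hx
        rcases Finset.mem_insert.mp hx with h | h
        · exact h ▸ hv
        · exact (Finset.mem_filter.mp h).1
      have hnm : v ∉ (S.filter fun u => G.Adj v u) := by
        simp [G.irrefl]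
      have := Finset.card_le_card hsub
      rw [Finset.card_insert_of_notMem hnm] at this
      unfold degIn
      exact_mod_cast this
    have hdef := hS v hv
    have h2 : δ + k ≤ 2 * (degIn G S v : ℤ) := by
      have : (degIn G S v : ℤ) + (degIn G Sᶜ v : ℤ) = (G.degree v : ℤ) := by
        exact_mod_cast hsplit
      linarith
    linarith
  -- the set of achievable partition sizes
  set T : Set ℕ := {r : ℕ | ∃ P : Finpartition (univ : Finset V),
    IsDefAlliancePartition G k P ∧ P.parts.card = r} with hT
  have hbdd : BddAbove T := by
    refine ⟨Fintype.card V, fun r hr => ?_⟩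
    obtain ⟨P, _, hPr⟩ := hr
    have := P.card_parts_le_card
    simpa [hPr, Finset.card_univ] using this
  have hne : T.Nonempty := by
    by_contra h
    rw [Set.not_nonempty_iff_eq_empty] at h
    rw [defPartitionNum, hT.symm, h] at hpart
    simp at hpart
  have hmem : defPartitionNum G k ∈ T := Nat.sSup_mem hne hbdd
  obtain ⟨P, hP, hPcard⟩ := hmem
  -- main counting bound: r * (δ + k + 2) ≤ 2 n, with refinement in odd case
  have hsum : ∑ S ∈ P.parts, (S.card : ℤ) = (Fintype.card V : ℤ) := by
    have := P.sum_card_parts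
    rw [Finset.card_univ] at this
    exact_mod_cast this
  have hmain : ∀ c : ℤ, (∀ S ∈ P.parts, c ≤ 2 * (S.card : ℤ)) →
      (defPartitionNum G k : ℤ) * c ≤ 2 * (Fintype.card V : ℤ) := by
    intro c hc
    calc (defPartitionNum G k : ℤ) * c = ∑ _S ∈ P.parts, c := by
          rw [Finset.sum_const, ← hPcard]; push_cast; ring
      _ ≤ ∑ S ∈ P.parts, 2 * (S.card : ℤ) := Finset.sum_le_sum hc
      _ = 2 * (Fintype.card V : ℤ) := by rw [← Finset.mul_sum, hsum]
  constructor
  · intro _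
    rw [Int.le_ediv_iff_mul_le (by linarith : (0:ℤ) < δ + k + 2)]
    exact hmain _ (fun S hS => key S (hP S hS))
  · intro hodd
    rw [Int.le_ediv_iff_mul_le (by linarith : (0:ℤ) < δ + k + 3)]
    refine hmain _ (fun S hS => ?_)
    have h2 := key S (hP S hS)
    rcases lt_or_eq_of_le h2 with h | h
    · linarith
    · exfalso
      have : Even (δ + k + 2) := h ▸ even_two_mul _
      have : Even (δ + k) := by
        rcases this with ⟨m, hm⟩
        exact ⟨m - 1, by linarith⟩
      exact (Int.not_odd_iff_even.mpr this) hodd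
end

section
/- Let Γ be a simple graph of order n that is partitionable into global defensive k-alliances. Then ψ_k^{gd}(Γ) ≤ ⌊(√(k²+4n) − k)/2⌋. -/
open Finset

/-- If `Γ` of order `n` is partitionable into global defensive `k`-alliances, then
`ψₖᵍᵈ(Γ) ≤ ⌊(√(k² + 4n) - k)/2⌋`. -/
theorem statement1 {V : Type*} [Fintype V] [DecidableEq V]
    (G : SimpleGraph V) [DecidableRel G.Adj] (k : ℤ)
    (hpart : 2 ≤ globalDefPartitionNum G k) :
    (globalDefPartitionNum G k : ℤ) ≤
      ⌊(Real.sqrt ((k : ℝ) ^ 2 + 4 * (Fintype.card V : ℝ)) - (k : ℝ)) / 2⌋ := by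

  set n := Fintype.card V with hn
  -- obtain a partition achieving the sup
  set Sset := {r : ℕ | ∃ P : Finpartition (univ : Finset V),
    IsGlobalDefAlliancePartition G k P ∧ P.parts.card = r} with hSset
  have hbdd : BddAbove Sset := by
    refine ⟨n, ?_⟩
    rintro r ⟨P, -, rfl⟩
    simpa using P.card_parts_le_card
  have hne : Sset.Nonempty := by
    by_contra h
    rw [Set.not_nonempty_iff_eq_empty] at h
    have : globalDefPartitionNum G k = 0 := by
      simp [globalDefPartitionNum, ← hSset, h]
    omega
  have hmem : globalDefPartitionNum G k ∈ Sset := Nat.sSup_mem hne hbdd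
  obtain ⟨P, hP, hcard⟩ := hmem
  set r : ℕ := globalDefPartitionNum G k with hr
  -- key: (r : ℤ) + k ≤ card S for each part S
  have key : ∀ S ∈ P.parts, (r : ℤ) + k ≤ (S.card : ℤ) := by
    intro S hS
    obtain ⟨⟨⟨v, hv⟩, hdef⟩, hdomS⟩ := hP S hS
    -- r - 1 ≤ degIn G Sᶜ v
    have h1 : (r : ℤ) - 1 ≤ (degIn G Sᶜ v : ℤ) := by
      have hcard' : (P.parts.erase S).card = r - 1 := by
        rw [Finset.card_erase_of_mem hS, hcard]
      have hle : (P.parts.erase S).card ≤ degIn G Sᶜ v := by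
        classical
        have hex : ∀ T ∈ P.parts.erase S, ∃ u ∈ T, G.Adj v u := by
          intro T hT
          obtain ⟨hTS, hTP⟩ := Finset.mem_erase.mp hT
          have hvT : v ∉ T := fun hvT =>
            hTS (P.eq_of_mem_parts hTP hS hvT hv)
          exact (hP T hTP).2 v hvT
        set f : Finset V → V := fun T => if h : ∃ u ∈ T, G.Adj v u then h.choose else v
          with hfdef
        have hfT : ∀ T ∈ P.parts.erase S, f T ∈ T ∧ G.Adj v (f T) := by
          intro T hT
          have h := hex T hT
          simp only [hfdef, dif_pos h]
          exact ⟨h.choose_spec.1, h.choose_spec.2⟩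
        refine Finset.card_le_card_of_injOn f ?_ ?_
        · intro T hT
          obtain ⟨hTS, hTP⟩ := Finset.mem_erase.mp hT
          obtain ⟨hfin, hfadj⟩ := hfT T hT
          refine Finset.mem_filter.mpr ⟨Finset.mem_compl.mpr ?_, hfadj⟩
          intro hfS
          exact hTS (P.eq_of_mem_parts hTP hS hfin hfS)
        · intro T₁ hT₁ T₂ hT₂ hf12
          have h1 := (hfT T₁ hT₁).1
          have h2 := (hfT T₂ hT₂).1
          rw [hf12] at h1
          exact P.eq_of_mem_parts (Finset.mem_erase.mp hT₁).2
            (Finset.mem_erase.mp hT₂).2 h1 h2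
      have : (r : ℤ) - 1 ≤ ((P.parts.erase S).card : ℤ) := by
        rw [hcard']
        have : 2 ≤ r := hpart
        omega
      calc (r : ℤ) - 1 ≤ ((P.parts.erase S).card : ℤ) := this
        _ ≤ (degIn G Sᶜ v : ℤ) := by exact_mod_cast hle
    have h2 : (degIn G Sᶜ v : ℤ) + k ≤ (degIn G S v : ℤ) := hdef v hv
    have h3 : (degIn G S v : ℤ) + 1 ≤ (S.card : ℤ) := by
      have : degIn G S v < S.card := by
        have hsub : S.filter (fun u => G.Adj v u) ⊆ S.erase v := by
          intro u hu
          rw [Finset.mem_filter] at hu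
          exact Finset.mem_erase.mpr ⟨fun h => G.irrefl (h ▸ hu.2), hu.1⟩
        calc degIn G S v ≤ (S.erase v).card := Finset.card_le_card hsub
          _ < S.card := Finset.card_erase_lt_of_mem hv
      exact_mod_cast this
    omega
  -- sum over parts
  have hsum : (r : ℤ) * ((r : ℤ) + k) ≤ (n : ℤ) := by
    have := Finset.sum_le_sum key
    rw [Finset.sum_const, hcard] at this
    have hn' : ∑ S ∈ P.parts, (S.card : ℤ) = (n : ℤ) := by
      rw [← Nat.cast_sum]
      norm_cast
      simpa [hn] using P.sum_card_parts
    rw [hn'] at this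
    rw [mul_add]
    simpa [nsmul_eq_mul, mul_add] using this
  -- conclude
  rw [Int.le_floor]
  have hs : ((2 * r + k : ℤ) : ℝ) ≤ Real.sqrt ((k : ℝ) ^ 2 + 4 * (n : ℝ)) := by
    have h1 : ((2 * r + k : ℤ) : ℝ) ^ 2 ≤ (k : ℝ) ^ 2 + 4 * (n : ℝ) := by
      have : ((r : ℤ) * ((r : ℤ) + k) : ℝ) ≤ ((n : ℤ) : ℝ) := by exact_mod_cast hsum
      push_cast at this ⊢
      nlinarith [this]
    calc ((2 * r + k : ℤ) : ℝ) ≤ |((2 * r + k : ℤ) : ℝ)| := le_abs_self _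
      _ = Real.sqrt (((2 * r + k : ℤ) : ℝ) ^ 2) := (Real.sqrt_sq_eq_abs _).symm
      _ ≤ Real.sqrt ((k : ℝ) ^ 2 + 4 * (n : ℝ)) := Real.sqrt_le_sqrt h1
  push_cast at hs ⊢
  linarith
end

section
/- Let Γ be a simple graph with minimum degree δ that is partitionable into global defensive k-alliances. Then ψ_k^{gd}(Γ) ≤ ⌊(δ − k + 2)/2⌋. -/
open Finset

/-- If `Γ` with minimum degree `δ` is partitionable into global defensive `k`-alliances, then
`ψₖᵍᵈ(Γ) ≤ ⌊(δ - k + 2)/2⌋`. -/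
theorem statement2 {V : Type*} [Fintype V] [DecidableEq V]
    (G : SimpleGraph V) [DecidableRel G.Adj] (k : ℤ)
    (hpart : 2 ≤ globalDefPartitionNum G k) :
    (globalDefPartitionNum G k : ℤ) ≤ Int.fdiv ((G.minDegree : ℤ) - k + 2) 2 := by

  set A := {r : ℕ | ∃ P : Finpartition (univ : Finset V),
    IsGlobalDefAlliancePartition G k P ∧ P.parts.card = r} with hA
  have hne : A.Nonempty := by
    by_contra h
    rw [Set.not_nonempty_iff_eq_empty] at h
    have h0 : globalDefPartitionNum G k = 0 := by
      simp [globalDefPartitionNum, ← hA, h]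
    omega
  have hbdd : BddAbove A := by
    refine ⟨(univ : Finset V).card, ?_⟩
    rintro r ⟨P, -, rfl⟩
    exact P.card_parts_le_card
  have hmem : globalDefPartitionNum G k ∈ A := Nat.sSup_mem hne hbdd
  obtain ⟨P, hP, hcard⟩ := hmem
  have h2 : 2 ≤ P.parts.card := by omega
  have hVne : Nonempty V := by
    obtain ⟨S, hS⟩ := Finset.card_pos.mp (by omega : 0 < P.parts.card)
    obtain ⟨v0, -⟩ := (hP S hS).1.1
    exact ⟨v0⟩
  obtain ⟨v, hvdeg⟩ := G.exists_minimal_degree_vertex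
  obtain ⟨S, hSp, hvS⟩ := P.exists_mem (mem_univ v)
  have hdisj : ∀ T ∈ P.parts.erase S, Disjoint T S := by
    intro T hT
    exact P.disjoint (Finset.mem_of_mem_erase hT) hSp (Finset.ne_of_mem_erase hT)
  have hone : ∀ T ∈ P.parts.erase S, 1 ≤ (T.filter fun u => G.Adj v u).card := by
    intro T hT
    have hvT : v ∉ T := fun hv' =>
      Finset.notMem_empty v ((hdisj T hT).le_bot (Finset.mem_inter.mpr ⟨hv', hvS⟩))
    obtain ⟨u, huT, hadj⟩ := (hP T (Finset.mem_of_mem_erase hT)).2 v hvT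
    exact Finset.card_pos.mpr ⟨u, Finset.mem_filter.mpr ⟨huT, hadj⟩⟩
  have hlow : P.parts.card - 1 ≤ degIn G Sᶜ v := by
    have hbU : ((P.parts.erase S).biUnion fun T => T.filter fun u => G.Adj v u)
        ⊆ Sᶜ.filter fun u => G.Adj v u := by
      intro u hu
      obtain ⟨T, hT, hu'⟩ := Finset.mem_biUnion.mp hu
      obtain ⟨huT, hadj⟩ := Finset.mem_filter.mp hu'
      refine Finset.mem_filter.mpr ⟨Finset.mem_compl.mpr ?_, hadj⟩
      intro huS
      exact Finset.notMem_empty u ((hdisj T hT).le_bot (Finset.mem_inter.mpr ⟨huT, huS⟩))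
    have hcB : ((P.parts.erase S).biUnion fun T => T.filter fun u => G.Adj v u).card
        = ∑ T ∈ P.parts.erase S, (T.filter fun u => G.Adj v u).card := by
      apply Finset.card_biUnion
      intro T₁ h₁ T₂ h₂ hne'
      exact Finset.disjoint_filter_filter
        (P.disjoint (Finset.mem_of_mem_erase h₁) (Finset.mem_of_mem_erase h₂) hne')
    calc P.parts.card - 1 = (P.parts.erase S).card := (Finset.card_erase_of_mem hSp).symm
      _ = ∑ _T ∈ P.parts.erase S, 1 := Finset.card_eq_sum_ones _
      _ ≤ ∑ T ∈ P.parts.erase S, (T.filter fun u => G.Adj v u).card :=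
          Finset.sum_le_sum hone
      _ = ((P.parts.erase S).biUnion fun T => T.filter fun u => G.Adj v u).card := hcB.symm
      _ ≤ degIn G Sᶜ v := Finset.card_le_card hbU
  have hdef := (hP S hSp).1.2 v hvS
  have hsum : degIn G S v + degIn G Sᶜ v = G.degree v := by
    unfold degIn
    rw [← Finset.card_union_of_disjoint
      (Finset.disjoint_filter_filter disjoint_compl_right),
      ← Finset.filter_union, Finset.union_compl]
    rw [SimpleGraph.degree, SimpleGraph.neighborFinset_eq_filter]
  have hmd : G.minDegree = G.degree v := hvdeg
  rw [Int.fdiv_eq_ediv_of_nonneg _ (by norm_num)]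
  have hsum' : (degIn G S v : ℤ) + (degIn G Sᶜ v : ℤ) = (G.degree v : ℤ) := by
    exact_mod_cast hsum
  have hmd' : (G.minDegree : ℤ) = (G.degree v : ℤ) := by exact_mod_cast hmd
  omega
end

section
/- Let Γ be a simple graph of order n with minimum degree δ, and let k be an integer with 1−δ ≤ k ≤ δ. If ψ_k^{gd}(Γ) ≥ 2, then γ_k^d(Γ) + ψ_k^{gd}(Γ) ≤ (n+4)/2. -/
open Finset

private lemma degIn_add_degIn_compl {V : Type*} [Fintype V] [DecidableEq V] (G : SimpleGraph V)
    [DecidableRel G.Adj] (S : Finset V) (v : V) :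
    degIn G S v + degIn G Sᶜ v = G.degree v := by
  rw [degIn, degIn, ← Finset.card_union_of_disjoint
    (Finset.disjoint_filter_filter (disjoint_compl_right)), ← Finset.filter_union,
    Finset.union_compl]
  rw [SimpleGraph.degree, SimpleGraph.neighborFinset_eq_filter]

private lemma two_le_part {V : Type*} [Fintype V] [DecidableEq V] (G : SimpleGraph V)
    [DecidableRel G.Adj] {k : ℤ} (hk₁ : 1 - (G.minDegree : ℤ) ≤ k) {S : Finset V}
    (hS : IsDefensiveAlliance G k S) : 2 ≤ S.card := by
  obtain ⟨⟨v, hv⟩, hall⟩ := hS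
  have h1 := hall v hv
  have h2 : degIn G S v + degIn G Sᶜ v = G.degree v := degIn_add_degIn_compl G S v
  have h3 : G.minDegree ≤ G.degree v := G.minDegree_le_degree v
  have h4 : 1 ≤ degIn G S v := by
    have : (1 : ℤ) ≤ 2 * (degIn G S v : ℤ) := by
      have : ((degIn G S v : ℤ) + (degIn G Sᶜ v : ℤ)) = (G.degree v : ℤ) := by exact_mod_cast h2
      have h3' : (G.minDegree : ℤ) ≤ (G.degree v : ℤ) := by exact_mod_cast h3
      linarith
    omega
  obtain ⟨u, hu⟩ := Finset.card_pos.mp h4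
  rw [Finset.mem_filter] at hu
  have hne : v ≠ u := hu.2.ne
  exact Finset.one_lt_card.mpr ⟨v, hv, u, hu.1, hne⟩

/-- For `1 - δ ≤ k ≤ δ`, if `ψₖᵍᵈ(Γ) ≥ 2` then `γₖᵈ(Γ) + ψₖᵍᵈ(Γ) ≤ (n+4)/2`. -/
theorem statement3 {V : Type*} [Fintype V] [DecidableEq V]
    (G : SimpleGraph V) [DecidableRel G.Adj] (k : ℤ)
    (hk₁ : 1 - (G.minDegree : ℤ) ≤ k) (hk₂ : k ≤ (G.minDegree : ℤ))
    (hpart : 2 ≤ globalDefPartitionNum G k) :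
    (globalDefAllianceNum G k : ℚ) + (globalDefPartitionNum G k : ℚ) ≤
      ((Fintype.card V : ℚ) + 4) / 2 := by
  set T := {r : ℕ | ∃ P : Finpartition (univ : Finset V),
    IsGlobalDefAlliancePartition G k P ∧ P.parts.card = r} with hT
  have hbdd : BddAbove T := by
    refine ⟨Fintype.card V, ?_⟩
    rintro r ⟨P, -, rfl⟩
    simpa using P.card_parts_le_card
  have hne : T.Nonempty := by
    by_contra h
    rw [Set.not_nonempty_iff_eq_empty] at h
    have : globalDefPartitionNum G k = 0 := by
      rw [globalDefPartitionNum, ← hT, h]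
      exact csSup_empty
    omega
  have hmem : globalDefPartitionNum G k ∈ T := Nat.sSup_mem hne hbdd
  obtain ⟨P, hP, hcard⟩ := hmem
  set r := globalDefPartitionNum G k with hr
  -- parts nonempty
  have hparts_ne : P.parts.Nonempty := Finset.card_pos.mp (by omega)
  obtain ⟨S₀, hS₀, hmin⟩ := P.parts.exists_min_image Finset.card hparts_ne
  -- gamma ≤ |S₀|
  have hγ : globalDefAllianceNum G k ≤ S₀.card :=
    Nat.sInf_le ⟨S₀, hP S₀ hS₀, rfl⟩
  -- r * |S₀| ≤ n
  have hsum : ∑ S ∈ P.parts, S.card = Fintype.card V := by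
    simpa using P.sum_card_parts
  have hrs : r * S₀.card ≤ Fintype.card V := by
    calc r * S₀.card = ∑ _S ∈ P.parts, S₀.card := by rw [Finset.sum_const, hcard, smul_eq_mul]
    _ ≤ ∑ S ∈ P.parts, S.card := Finset.sum_le_sum fun S hS => hmin S hS
    _ = Fintype.card V := hsum
  -- 2r ≤ n
  have h2r : 2 * r ≤ Fintype.card V := by
    have : 2 ≤ S₀.card := two_le_part G hk₁ (hP S₀ hS₀).1
    nlinarith
  -- finish in ℚ
  have hq1 : (r : ℚ) * (globalDefAllianceNum G k : ℚ) ≤ (Fintype.card V : ℚ) := by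
    exact_mod_cast le_trans (Nat.mul_le_mul_left r hγ) hrs
  have hq2 : 2 * (r : ℚ) ≤ (Fintype.card V : ℚ) := by exact_mod_cast h2r
  have hq3 : (2 : ℚ) ≤ (r : ℚ) := by exact_mod_cast hpart
  nlinarith [mul_nonneg (sub_nonneg.mpr hq3) (sub_nonneg.mpr hq2)]
end

section
/- Let Γ be a simple graph admitting a partition {V_1,...,V_r} of its vertex set into r ≥ 2 global defensive k-alliances, and let C be the number of edges of Γ having endpoints in different sets of this partition. Then C ≥ (1/2) r (r−1) γ_k^d(Γ). -/
open Finset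

/-- The set of edges of `G` whose two endpoints lie in different parts of the partition `P`. -/
noncomputable def crossEdges {V : Type*} [Fintype V] [DecidableEq V] (G : SimpleGraph V)
    [DecidableRel G.Adj] (P : Finpartition (univ : Finset V)) : Finset (Sym2 V) :=
  @Finset.filter _ (fun e => ¬ ∃ S ∈ P.parts, ∀ v ∈ e, v ∈ S)
    (Classical.decPred _) G.edgeFinset

/-- For a partition of `Γ` into `r ≥ 2` global defensive `k`-alliances, the number `C` of
edges with endpoints in different parts satisfies `C ≥ (1/2) r (r-1) γₖᵈ(Γ)`. -/
theorem statement4 {V : Type*} [Fintype V] [DecidableEq V]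
    (G : SimpleGraph V) [DecidableRel G.Adj] (k : ℤ) (r : ℕ) (hr : 2 ≤ r)
    (P : Finpartition (univ : Finset V)) (hP : IsGlobalDefAlliancePartition G k P)
    (hPr : P.parts.card = r) :
    (1 / 2 : ℚ) * r * ((r : ℚ) - 1) * (globalDefAllianceNum G k : ℚ) ≤
      ((crossEdges G P).card : ℚ) := by
  classical
  set γ := globalDefAllianceNum G k with hγdef
  -- γ ≤ card of any part
  have hγle : ∀ S ∈ P.parts, γ ≤ S.card := by
    intro S hS
    exact Nat.sInf_le ⟨S, hP S hS, rfl⟩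
  -- the counting set: ordered pairs of distinct parts with a vertex in the second part
  set D : Finset ((Finset V × Finset V) × V) :=
    (P.parts.offDiag ×ˢ (univ : Finset V)).filter (fun q => q.2 ∈ q.1.2) with hD
  -- the map sending such a datum to a crossing edge
  set f : (Finset V × Finset V) × V → Sym2 V := fun q =>
    if h : ∃ u ∈ q.1.1, G.Adj q.2 u then s(q.2, h.choose) else s(q.2, q.2) with hf
  have hmemD : ∀ q ∈ D, q.1.1 ∈ P.parts ∧ q.1.2 ∈ P.parts ∧ q.1.1 ≠ q.1.2 ∧ q.2 ∈ q.1.2 := by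
    intro q hq
    rw [hD, Finset.mem_filter, Finset.mem_product, Finset.mem_offDiag] at hq
    exact ⟨hq.1.1.1, hq.1.1.2.1, hq.1.1.2.2, hq.2⟩
  have hex : ∀ q ∈ D, ∃ u ∈ q.1.1, G.Adj q.2 u := by
    intro q hq
    obtain ⟨hA, hB, hAB, hv⟩ := hmemD q hq
    have hvA : q.2 ∉ q.1.1 := fun hvA => hAB (P.eq_of_mem_parts hA hB hvA hv)
    exact (hP q.1.1 hA).2 q.2 hvA
  have hfval : ∀ q ∈ D, ∃ u ∈ q.1.1, G.Adj q.2 u ∧ f q = s(q.2, u) := by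
    intro q hq
    have h := hex q hq
    refine ⟨h.choose, h.choose_spec.1, h.choose_spec.2, ?_⟩
    simp only [hf, dif_pos h]
  -- image lands in crossEdges
  have himg : ∀ q ∈ D, f q ∈ crossEdges G P := by
    intro q hq
    obtain ⟨hA, hB, hAB, hv⟩ := hmemD q hq
    obtain ⟨u, huA, hadj, hfq⟩ := hfval q hq
    rw [hfq]
    simp only [crossEdges, Finset.mem_filter, SimpleGraph.mem_edgeFinset]
    constructor
    · exact hadj
    · rintro ⟨S, hS, hall⟩
      have h1 : q.2 ∈ S := hall q.2 (by simp)
      have h2 : u ∈ S := hall u (by simp)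
      exact hAB ((P.eq_of_mem_parts hA hS huA h2).trans
        (P.eq_of_mem_parts hS hB h1 hv))
  -- fibers have size ≤ 2
  have hfiber : ∀ e ∈ D.image f, (D.filter fun q => f q = e).card ≤ 2 := by
    intro e _
    induction e using Sym2.ind with
    | _ x y =>
      have : (D.filter fun q => f q = s(x, y)).card ≤ ({x, y} : Finset V).card := by
        apply Finset.card_le_card_of_injOn (fun q => q.2)
        · intro q hq
          rw [Finset.mem_coe, Finset.mem_filter] at hq
          obtain ⟨u, huA, hadj, hfq⟩ := hfval q hq.1
          have := hq.2
          rw [hfq, Sym2.eq_iff] at this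
          rcases this with ⟨h1, _⟩ | ⟨h1, _⟩ <;> simp [h1]
        · intro q hq q' hq' hqq'
          simp only [Finset.coe_filter, Set.mem_setOf_eq] at hq hq'
          obtain ⟨u, huA, hadj, hfq⟩ := hfval q hq.1
          obtain ⟨u', huA', hadj', hfq'⟩ := hfval q' hq'.1
          have heq : s(q.2, u) = s(q'.2, u') := by rw [← hfq, ← hfq', hq.2, hq'.2]
          have hv : q.2 = q'.2 := hqq'
          have huu : u = u' := by
            rw [hv, Sym2.eq_iff] at heq
            rcases heq with ⟨_, h⟩ | ⟨h1, h2⟩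
            · exact h
            · rw [← h1, h2]
          obtain ⟨hA, hB, _, hvB⟩ := hmemD q hq.1
          obtain ⟨hA', hB', _, hvB'⟩ := hmemD q' hq'.1
          have hBeq : q.1.2 = q'.1.2 := P.eq_of_mem_parts hB hB' hvB (hv ▸ hvB')
          have hAeq : q.1.1 = q'.1.1 := P.eq_of_mem_parts hA hA' huA (huu ▸ huA')
          exact Prod.ext (Prod.ext hAeq hBeq) hv
      calc (D.filter fun q => f q = s(x, y)).card ≤ ({x, y} : Finset V).card := this
        _ ≤ 2 := Finset.card_insert_le _ _ |>.trans (by simp)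
  -- D.card ≤ 2 * image card ≤ 2 * crossEdges card
  have h1 : D.card ≤ 2 * (D.image f).card := Finset.card_le_mul_card_image D 2 hfiber
  have h2 : (D.image f).card ≤ (crossEdges G P).card := by
    apply Finset.card_le_card
    intro e he
    obtain ⟨q, hq, rfl⟩ := Finset.mem_image.mp he
    exact himg q hq
  -- lower bound D.card
  have h3 : r * (r - 1) * γ ≤ D.card := by
    have hcard : D.card = ∑ p ∈ P.parts.offDiag, p.2.card := by
      rw [hD, Finset.card_filter, Finset.sum_product]
      refine Finset.sum_congr rfl fun p _ => ?_
      simp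
    rw [hcard]
    calc r * (r - 1) * γ = P.parts.offDiag.card * γ := by
          rw [Finset.offDiag_card, hPr, Nat.mul_sub_one]
      _ ≤ ∑ p ∈ P.parts.offDiag, p.2.card := by
          rw [← smul_eq_mul]
          apply Finset.card_nsmul_le_sum
          intro p hp
          rw [Finset.mem_offDiag] at hp
          exact hγle p.2 hp.2.1
  -- put it together
  have hfinal : r * (r - 1) * γ ≤ 2 * (crossEdges G P).card :=
    h3.trans (h1.trans (by omega))
  have hq : ((r : ℚ) * ((r : ℚ) - 1) * γ) ≤ 2 * ((crossEdges G P).card : ℚ) := by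
    have := (Nat.cast_le (α := ℚ)).mpr hfinal
    push_cast at this
    have hr1 : (1 : ℚ) ≤ (r : ℚ) := by exact_mod_cast (by omega : 1 ≤ r)
    rw [Nat.cast_sub (by omega : 1 ≤ r)] at this
    push_cast at this
    linarith
  linarith
end

section
/- Let Γ be a simple graph admitting a partition {V_1,...,V_r} of its vertex set into r ≥ 2 global defensive k-alliances, and let C be the number of edges of Γ having endpoints in different sets of this partition. Then C ≥ (1/2) r (r−1) (r+k). -/
open Finset

section Aux

variable {V : Type*} [Fintype V] [DecidableEq V] (G : SimpleGraph V) [DecidableRel G.Adj]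
  (k : ℤ) (P : Finpartition (univ : Finset V))

lemma degOut_ge (hP : IsGlobalDefAlliancePartition G k P) {S : Finset V} (hS : S ∈ P.parts)
    {v : V} (hv : v ∈ S) : P.parts.card - 1 ≤ degIn G Sᶜ v := by
  classical
  have hsub : (P.parts.erase S).biUnion (fun T => T.filter fun u => G.Adj v u)
      ⊆ Sᶜ.filter fun u => G.Adj v u := by
    intro u hu
    simp only [mem_biUnion, mem_erase] at hu
    obtain ⟨T, ⟨hTS, hT⟩, hu⟩ := hu
    rw [mem_filter] at hu ⊢
    refine ⟨mem_compl.2 fun huS => hTS (P.eq_of_mem_parts hT hS hu.1 huS), hu.2⟩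
  have hdisj : ∀ x ∈ P.parts.erase S, ∀ y ∈ P.parts.erase S, x ≠ y →
      Disjoint (x.filter fun u => G.Adj v u) (y.filter fun u => G.Adj v u) := by
    intro a ha b hb hab
    have : Disjoint a b := by
      exact P.disjoint (mem_of_mem_erase ha) (mem_of_mem_erase hb) hab
    exact this.mono (filter_subset _ _) (filter_subset _ _)
  calc P.parts.card - 1 = (P.parts.erase S).card := (card_erase_of_mem hS).symm
    _ = ∑ _T ∈ P.parts.erase S, 1 := by simp
    _ ≤ ∑ T ∈ P.parts.erase S, (T.filter fun u => G.Adj v u).card := by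
        apply sum_le_sum
        intro T hT
        have hTp := mem_of_mem_erase hT
        have hvT : v ∉ T := fun hvT => (ne_of_mem_erase hT) (P.eq_of_mem_parts hTp hS hvT hv)
        obtain ⟨u, hu, hadj⟩ := (hP T hTp).2 v hvT
        exact card_pos.2 ⟨u, mem_filter.2 ⟨hu, hadj⟩⟩
    _ = ((P.parts.erase S).biUnion fun T => T.filter fun u => G.Adj v u).card :=
        (card_biUnion hdisj).symm
    _ ≤ _ := card_le_card hsub

lemma card_part_ge (hP : IsGlobalDefAlliancePartition G k P) {S : Finset V}
    (hS : S ∈ P.parts) : (P.parts.card : ℤ) + k ≤ (S.card : ℤ) := by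
  obtain ⟨v, hv⟩ := (hP S hS).1.1
  have h1 := (hP S hS).1.2 v hv
  have h2 := degOut_ge G k P hP hS hv
  have h3 : degIn G S v ≤ S.card - 1 := by
    have hsub : S.filter (fun u => G.Adj v u) ⊆ S.erase v := by
      intro u hu
      rw [mem_filter] at hu
      exact mem_erase.2 ⟨fun h => G.loopless.irrefl v (h ▸ hu.2), hu.1⟩
    calc degIn G S v ≤ (S.erase v).card := card_le_card hsub
      _ = S.card - 1 := card_erase_of_mem hv
  have hc : 1 ≤ S.card := card_pos.2 ⟨v, hv⟩
  omega

end Aux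

section Cross

variable {V : Type*} [Fintype V] [DecidableEq V] (G : SimpleGraph V) [DecidableRel G.Adj]
  (P : Finpartition (univ : Finset V))

/-- The graph of cross edges of `G` with respect to the partition `P`. -/
def crossGraph : SimpleGraph V where
  Adj a b := G.Adj a b ∧ ¬ ∃ S ∈ P.parts, a ∈ S ∧ b ∈ S
  symm := by
    constructor
    rintro a b ⟨h1, h2⟩
    refine ⟨h1.symm, fun ⟨S, hS, hb, ha⟩ => h2 ⟨S, hS, ha, hb⟩⟩
  loopless := ⟨fun a h => G.loopless.irrefl a h.1⟩

open Classical in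
lemma crossEdges_eq : crossEdges G P = (crossGraph G P).edgeFinset := by
  classical
  ext e
  induction e using Sym2.ind with
  | _ a b =>
    have h1 : s(a, b) ∈ crossEdges G P ↔
        s(a, b) ∈ G.edgeFinset ∧ ¬ ∃ S ∈ P.parts, ∀ v ∈ s(a, b), v ∈ S :=
      @Finset.mem_filter _ _ (Classical.decPred _) _ _
    rw [h1, SimpleGraph.mem_edgeFinset, SimpleGraph.mem_edgeFinset,
      SimpleGraph.mem_edgeSet, SimpleGraph.mem_edgeSet]
    show G.Adj a b ∧ _ ↔ (crossGraph G P).Adj a b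
    unfold crossGraph
    simp only [Sym2.mem_iff]
    constructor
    · rintro ⟨h1, h2⟩
      refine ⟨h1, fun ⟨S, hS, ha, hb⟩ => h2 ⟨S, hS, fun v hv => ?_⟩⟩
      rcases hv with rfl | rfl
      · exact ha
      · exact hb
    · rintro ⟨h1, h2⟩
      refine ⟨h1, fun ⟨S, hS, h⟩ => h2 ⟨S, hS, h a (Or.inl rfl), h b (Or.inr rfl)⟩⟩

open Classical in
lemma crossGraph_degree {S : Finset V} (hS : S ∈ P.parts) {v : V} (hv : v ∈ S) :
    (crossGraph G P).degree v = degIn G Sᶜ v := by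
  classical
  rw [SimpleGraph.degree, degIn]
  congr 1
  ext u
  rw [SimpleGraph.mem_neighborFinset, mem_filter, mem_compl]
  show (G.Adj v u ∧ _) ↔ _
  constructor
  · rintro ⟨h1, h2⟩
    exact ⟨fun huS => h2 ⟨S, hS, hv, huS⟩, h1⟩
  · rintro ⟨h1, h2⟩
    refine ⟨h2, fun ⟨T, hT, hvT, huT⟩ => h1 ?_⟩
    rwa [P.eq_of_mem_parts hT hS hvT hv] at huT

end Cross


/-- For a partition of `Γ` into `r ≥ 2` global defensive `k`-alliances, the number `C` of
edges with endpoints in different parts satisfies `C ≥ (1/2) r (r-1) (r+k)`. -/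
theorem statement5 {V : Type*} [Fintype V] [DecidableEq V]
    (G : SimpleGraph V) [DecidableRel G.Adj] (k : ℤ) (r : ℕ) (hr : 2 ≤ r)
    (P : Finpartition (univ : Finset V)) (hP : IsGlobalDefAlliancePartition G k P)
    (hPr : P.parts.card = r) :
    (1 / 2 : ℚ) * r * ((r : ℚ) - 1) * ((r : ℚ) + (k : ℚ)) ≤ ((crossEdges G P).card : ℚ) := by
  classical
  have key : (r : ℤ) * (r - 1) * (r + k) ≤ 2 * ((crossEdges G P).card : ℤ) := by
    have hdeg : ∀ v : V, (r : ℤ) - 1 ≤ ((crossGraph G P).degree v : ℤ) := by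
      intro v
      obtain ⟨S, hS, hvS⟩ := P.exists_mem (mem_univ v)
      rw [crossGraph_degree G P hS hvS]
      have := degOut_ge G k P hP hS hvS
      omega
    have hsum : ∑ v : V, (crossGraph G P).degree v = 2 * ((crossGraph G P).edgeFinset).card :=
      SimpleGraph.sum_degrees_eq_twice_card_edges _
    have hn : (r : ℤ) * (r + k) ≤ (Fintype.card V : ℤ) := by
      have h1 : ∀ S ∈ P.parts, (r : ℤ) + k ≤ (S.card : ℤ) := by
        intro S hS
        have := card_part_ge G k P hP hS
        omega
      calc (r : ℤ) * (r + k) = ∑ _S ∈ P.parts, ((r : ℤ) + k) := by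
            rw [Finset.sum_const, hPr]; ring
        _ ≤ ∑ S ∈ P.parts, (S.card : ℤ) := Finset.sum_le_sum h1
        _ = (Fintype.card V : ℤ) := by
            rw [← Nat.cast_sum]
            norm_cast
            rw [P.sum_card_parts, card_univ]
    have h2 : (Fintype.card V : ℤ) * ((r : ℤ) - 1) ≤
        ∑ v : V, ((crossGraph G P).degree v : ℤ) := by
      calc (Fintype.card V : ℤ) * ((r : ℤ) - 1) = ∑ _v : V, ((r : ℤ) - 1) := by
            rw [Finset.sum_const, card_univ]; ring
        _ ≤ _ := Finset.sum_le_sum fun v _ => hdeg v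
    have h3 : (∑ v : V, ((crossGraph G P).degree v : ℤ))
        = 2 * ((crossEdges G P).card : ℤ) := by
      rw [crossEdges_eq, ← Nat.cast_sum]
      exact_mod_cast congrArg (Nat.cast : ℕ → ℤ) hsum
    have hr1 : (0 : ℤ) ≤ (r : ℤ) - 1 := by
      have : (2 : ℤ) ≤ r := by exact_mod_cast hr
      omega
    nlinarith [mul_le_mul_of_nonneg_right hn hr1]
  have hq : (r : ℚ) * ((r : ℚ) - 1) * ((r : ℚ) + (k : ℚ)) ≤
      2 * ((crossEdges G P).card : ℚ) := by exact_mod_cast key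
  linarith
end

section
/- Let Γ be a simple graph of order n and size m. If Γ admits a partition of its vertex set into r ≥ 2 global defensive k-alliances all of the same cardinality, then r ≤ (2(m+n) − kn)/(2n). -/
open Finset

/-- If `Γ` (order `n`, size `m`) admits a partition into `r ≥ 2` global defensive
`k`-alliances of equal cardinality, then `r ≤ (2(m+n) - kn)/(2n)`. -/
theorem statement7 {V : Type*} [Fintype V] [DecidableEq V]
    (G : SimpleGraph V) [DecidableRel G.Adj] (k : ℤ) (r : ℕ) (hr : 2 ≤ r)
    (P : Finpartition (univ : Finset V)) (hP : IsGlobalDefAlliancePartition G k P)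
    (hPr : P.parts.card = r)
    (hequal : ∀ S ∈ P.parts, ∀ T ∈ P.parts, S.card = T.card) :
    (r : ℚ) ≤ (2 * ((G.edgeFinset.card : ℚ) + (Fintype.card V : ℚ)) -
      (k : ℚ) * (Fintype.card V : ℚ)) / (2 * (Fintype.card V : ℚ)) := by
  classical
  -- V is nonempty
  have hparts : P.parts.Nonempty := by
    rw [← Finset.card_pos, hPr]; omega
  obtain ⟨S₀, hS₀⟩ := hparts
  obtain ⟨v₀, hv₀⟩ := (hP S₀ hS₀).1.1
  have hn : 0 < Fintype.card V := Fintype.card_pos_iff.mpr ⟨v₀⟩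
  -- key degree bound
  have key : ∀ v : V, 2 * ((r : ℤ) - 1) + k ≤ (G.degree v : ℤ) := by
    intro v
    obtain ⟨S, hS, hvS⟩ := P.exists_mem (mem_univ v)
    have h1 : (degIn G Sᶜ v : ℤ) + k ≤ (degIn G S v : ℤ) := (hP S hS).1.2 v hvS
    -- domination gives r - 1 ≤ degIn G Sᶜ v
    have h2 : r - 1 ≤ degIn G Sᶜ v := by
      have hcard : (P.parts.erase S).card = r - 1 := by
        rw [Finset.card_erase_of_mem hS, hPr]
      rw [← hcard]
      set f : Finset V → V := fun T =>
        if h : ∃ u ∈ T, G.Adj v u then h.choose else v with hf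
      have hspec : ∀ T ∈ P.parts.erase S, f T ∈ T ∧ G.Adj v (f T) := by
        intro T hT
        obtain ⟨hTne, hTmem⟩ := Finset.mem_erase.mp hT
        have hvT : v ∉ T := by
          intro hvT
          exact hTne (P.eq_of_mem_parts hTmem hS hvT hvS)
        have hex : ∃ u ∈ T, G.Adj v u := (hP T hTmem).2 v hvT
        simp only [hf, dif_pos hex]
        exact hex.choose_spec
      apply Finset.card_le_card_of_injOn f
      · intro T hT
        obtain ⟨hTne, hTmem⟩ := Finset.mem_erase.mp hT
        obtain ⟨hmem, hadj⟩ := hspec T hT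
        show f T ∈ Finset.filter _ _
        refine Finset.mem_filter.mpr ⟨Finset.mem_compl.mpr ?_, hadj⟩
        intro hfS
        exact hTne (P.eq_of_mem_parts hTmem hS hmem hfS)
      · intro T1 hT1 T2 hT2 hfe
        obtain ⟨hTne1, hTmem1⟩ := Finset.mem_erase.mp hT1
        obtain ⟨hTne2, hTmem2⟩ := Finset.mem_erase.mp hT2
        have h1' := (hspec T1 hT1).1
        have h2' := (hspec T2 hT2).1
        rw [hfe] at h1'
        exact P.eq_of_mem_parts hTmem1 hTmem2 h1' h2'
    -- degree splits
    have h3 : G.degree v = degIn G S v + degIn G Sᶜ v := by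
      rw [degIn, degIn, ← Finset.card_union_of_disjoint
        (Finset.disjoint_filter_filter disjoint_compl_right),
        ← Finset.filter_union, Finset.union_compl]
      rw [← SimpleGraph.card_neighborFinset_eq_degree]
      congr 1
      ext u
      simp [SimpleGraph.mem_neighborFinset]
    have h2' : (r : ℤ) - 1 ≤ (degIn G Sᶜ v : ℤ) := by
      have : ((r - 1 : ℕ) : ℤ) ≤ (degIn G Sᶜ v : ℤ) := by exact_mod_cast h2
      omega
    rw [h3]
    push_cast
    linarith
  -- sum over all vertices
  have hsum : (Fintype.card V : ℤ) * (2 * ((r : ℤ) - 1) + k) ≤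
      2 * (G.edgeFinset.card : ℤ) := by
    calc (Fintype.card V : ℤ) * (2 * ((r : ℤ) - 1) + k)
        = ∑ _v : V, (2 * ((r : ℤ) - 1) + k) := by
          rw [Finset.sum_const, Finset.card_univ]; ring
      _ ≤ ∑ v : V, (G.degree v : ℤ) := Finset.sum_le_sum fun v _ => key v
      _ = 2 * (G.edgeFinset.card : ℤ) := by
          rw [← Nat.cast_sum]
          rw [SimpleGraph.sum_degrees_eq_twice_card_edges]
          push_cast; ring
  -- conclude in ℚ
  rw [le_div_iff₀ (by positivity)]
  have hsumQ : (Fintype.card V : ℚ) * (2 * ((r : ℚ) - 1) + k) ≤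
      2 * (G.edgeFinset.card : ℚ) := by exact_mod_cast hsum
  nlinarith [hsumQ]
end

section
/- Let Γ be a simple graph of order n, size m and minimum degree δ, and let r ≥ 2 be an integer. If k > (2m − r(r−1)(δ+2))/(n + r(r−1)) or k > 2(m − r²(r−1))/(n + 2r(r−1)), then Γ cannot be partitioned into r global defensive k-alliances. -/
open Finset

/-- If `k > (2m - r(r-1)(δ+2))/(n + r(r-1))` or `k > 2(m - r²(r-1))/(n + 2r(r-1))`, then
`Γ` cannot be partitioned into `r ≥ 2` global defensive `k`-alliances. -/
theorem statement8 {V : Type*} [Fintype V] [DecidableEq V] [Nonempty V]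
    (G : SimpleGraph V) [DecidableRel G.Adj] (k : ℤ) (r : ℕ) (hr : 2 ≤ r)
    (h : (k : ℚ) > (2 * (G.edgeFinset.card : ℚ) - (r : ℚ) * ((r : ℚ) - 1) *
            ((G.minDegree : ℚ) + 2)) / ((Fintype.card V : ℚ) + (r : ℚ) * ((r : ℚ) - 1)) ∨
         (k : ℚ) > 2 * ((G.edgeFinset.card : ℚ) - (r : ℚ) ^ 2 * ((r : ℚ) - 1)) /
            ((Fintype.card V : ℚ) + 2 * (r : ℚ) * ((r : ℚ) - 1))) :
    ¬ ∃ P : Finpartition (univ : Finset V),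
        IsGlobalDefAlliancePartition G k P ∧ P.parts.card = r := by

  rintro ⟨P, hP, hPr⟩
  classical
  have h1r : (1:ℤ) ≤ (r:ℤ) := by exact_mod_cast Nat.one_le_of_lt hr
  have h2r : (2:ℤ) ≤ (r:ℤ) := by exact_mod_cast hr
  -- degree splits as degIn S + degIn Sᶜ
  have hsplit : ∀ (S : Finset V) (v : V), degIn G S v + degIn G Sᶜ v = G.degree v := by
    intro S v
    unfold degIn
    rw [← Finset.card_union_of_disjoint
        (Finset.disjoint_filter_filter disjoint_compl_right),
      ← Finset.filter_union, Finset.union_compl]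
    simp [SimpleGraph.degree, SimpleGraph.neighborFinset_eq_filter]
  -- every vertex of a part has at least r-1 neighbors outside its part
  have hout : ∀ S ∈ P.parts, ∀ v ∈ S, (r:ℤ) - 1 ≤ (degIn G Sᶜ v : ℤ) := by
    intro S hS v hv
    have key : r - 1 ≤ degIn G Sᶜ v := by
      set f : Finset V → V := fun T => if h : ∃ u ∈ T, G.Adj v u then h.choose else v with hf
      have hfmem : ∀ T ∈ P.parts.erase S, f T ∈ T ∧ G.Adj v (f T) := by
        intro T hT
        have hT' := Finset.mem_of_mem_erase hT
        have hTne : T ≠ S := Finset.ne_of_mem_erase hT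
        have hvT : v ∉ T := fun hvT =>
          Finset.disjoint_left.mp (P.disjoint hT' hS hTne) hvT hv
        have hex : ∃ u ∈ T, G.Adj v u := (hP T hT').2 v hvT
        have hfe : f T = hex.choose := by simp [hf, dif_pos hex]
        rw [hfe]
        exact hex.choose_spec
      have hcard := Finset.card_le_card_of_injOn f
        (fun T hT => by
          obtain ⟨hmem, hadj⟩ := hfmem T hT
          have hT' := Finset.mem_of_mem_erase hT
          have hTne : T ≠ S := Finset.ne_of_mem_erase hT
          have hns : f T ∉ S := fun hc =>
            Finset.disjoint_left.mp (P.disjoint hT' hS hTne) hmem hc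
          exact Finset.mem_filter.mpr ⟨Finset.mem_compl.mpr hns, hadj⟩)
        (fun T1 hT1 T2 hT2 heq => by
          by_contra hne
          exact Finset.disjoint_left.mp
            (P.disjoint (Finset.mem_of_mem_erase hT1) (Finset.mem_of_mem_erase hT2) hne)
            (hfmem T1 hT1).1 (heq ▸ (hfmem T2 hT2).1))
      rw [Finset.card_erase_of_mem hS, hPr] at hcard
      exact hcard
    omega
  -- per-part facts
  have hpart : ∀ S ∈ P.parts,
      ((r:ℤ) + k ≤ (S.card : ℤ)) ∧ ((G.minDegree : ℤ) + k + 2 ≤ 2 * (S.card : ℤ)) ∧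
      (2*((r:ℤ)-1) + k) * (S.card : ℤ) ≤ ∑ v ∈ S, (G.degree v : ℤ) := by
    intro S hS
    obtain ⟨⟨hne, hdef⟩, hdom⟩ := hP S hS
    obtain ⟨v, hv⟩ := hne
    have hout' := hout S hS v hv
    have hdef' := hdef v hv
    have hsplit' := hsplit S v
    have hsplitZ : (degIn G S v : ℤ) + (degIn G Sᶜ v : ℤ) = (G.degree v : ℤ) := by
      exact_mod_cast hsplit'
    have hcard : (degIn G S v : ℤ) + 1 ≤ (S.card : ℤ) := by
      have hsub : S.filter (fun u => G.Adj v u) ⊆ S.erase v := by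
        intro u hu
        rw [Finset.mem_filter] at hu
        exact Finset.mem_erase.mpr ⟨(G.ne_of_adj hu.2).symm, hu.1⟩
      have hle := Finset.card_le_card hsub
      rw [Finset.card_erase_of_mem hv] at hle
      have hpos : 1 ≤ S.card := Finset.card_pos.mpr ⟨v, hv⟩
      unfold degIn
      omega
    have hdegmin : (G.minDegree : ℤ) ≤ (G.degree v : ℤ) := by
      exact_mod_cast G.minDegree_le_degree v
    refine ⟨by linarith, by linarith, ?_⟩
    have hvx : ∀ w ∈ S, (2*((r:ℤ)-1) + k) ≤ (G.degree w : ℤ) := by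
      intro w hw
      have ha := hout S hS w hw
      have hb := hdef w hw
      have hc : (degIn G S w : ℤ) + (degIn G Sᶜ w : ℤ) = (G.degree w : ℤ) := by
        exact_mod_cast hsplit S w
      linarith
    calc (2*((r:ℤ)-1) + k) * (S.card : ℤ) = ∑ _w ∈ S, (2*((r:ℤ)-1)+k) := by
          rw [Finset.sum_const, nsmul_eq_mul]; ring
      _ ≤ ∑ w ∈ S, (G.degree w : ℤ) := Finset.sum_le_sum hvx
  -- global sums
  have hbi : (univ : Finset V) = P.parts.biUnion id := by
    have hsp := P.sup_parts
    rw [Finset.sup_eq_biUnion] at hsp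
    exact hsp.symm
  have hsum_deg : ∑ S ∈ P.parts, ∑ v ∈ S, (G.degree v : ℤ) = 2 * (G.edgeFinset.card : ℤ) := by
    have h2m : ∑ v ∈ (univ : Finset V), (G.degree v : ℤ) = 2 * (G.edgeFinset.card : ℤ) := by
      exact_mod_cast congrArg (Nat.cast : ℕ → ℤ) (SimpleGraph.sum_degrees_eq_twice_card_edges G)
    rw [← h2m, Finset.sum_congr hbi (fun _ _ => rfl), Finset.sum_biUnion P.disjoint]
    rfl
  have hsum_card : ∑ S ∈ P.parts, (S.card : ℤ) = (Fintype.card V : ℤ) := by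
    have := P.sum_card_parts
    rw [Finset.card_univ] at this
    exact_mod_cast this
  have hn : (1:ℤ) ≤ (Fintype.card V : ℤ) := by exact_mod_cast Fintype.card_pos
  -- the two key integer inequalities
  have key1 : k * ((Fintype.card V : ℤ) + (r:ℤ)*((r:ℤ)-1)) + (r:ℤ)*((r:ℤ)-1)*((G.minDegree:ℤ)+2)
      ≤ 2 * (G.edgeFinset.card : ℤ) := by
    have hper : ∀ S ∈ P.parts,
        ((r:ℤ)-1)*((G.minDegree:ℤ)+k+2) + k * (S.card : ℤ) ≤ ∑ v ∈ S, (G.degree v : ℤ) := by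
      intro S hS
      obtain ⟨hc1, hc2, hc3⟩ := hpart S hS
      have e2 : (2*((r:ℤ)-1) + k) * (S.card : ℤ)
          = 2*((r:ℤ)-1)*(S.card : ℤ) + k * (S.card : ℤ) := by ring
      rw [e2] at hc3
      have e1 : ((r:ℤ)-1)*((G.minDegree:ℤ)+k+2) ≤ 2*((r:ℤ)-1)*(S.card : ℤ) := by
        have h0 : (0:ℤ) ≤ (r:ℤ)-1 := by linarith
        calc ((r:ℤ)-1)*((G.minDegree:ℤ)+k+2) ≤ ((r:ℤ)-1)*(2*(S.card:ℤ)) :=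
              mul_le_mul_of_nonneg_left hc2 h0
          _ = 2*((r:ℤ)-1)*(S.card : ℤ) := by ring
      linarith
    have hsum := Finset.sum_le_sum hper
    rw [hsum_deg, Finset.sum_add_distrib, Finset.sum_const, ← Finset.mul_sum,
      hsum_card, hPr, nsmul_eq_mul] at hsum
    linarith
  have key2 : k * ((Fintype.card V : ℤ) + 2*(r:ℤ)*((r:ℤ)-1)) + 2*(r:ℤ)^2*((r:ℤ)-1)
      ≤ 2 * (G.edgeFinset.card : ℤ) := by
    have hper : ∀ S ∈ P.parts,
        2*((r:ℤ)-1)*((r:ℤ)+k) + k * (S.card : ℤ) ≤ ∑ v ∈ S, (G.degree v : ℤ) := by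
      intro S hS
      obtain ⟨hc1, hc2, hc3⟩ := hpart S hS
      have e2 : (2*((r:ℤ)-1) + k) * (S.card : ℤ)
          = 2*((r:ℤ)-1)*(S.card : ℤ) + k * (S.card : ℤ) := by ring
      rw [e2] at hc3
      have e1 : 2*((r:ℤ)-1)*((r:ℤ)+k) ≤ 2*((r:ℤ)-1)*(S.card : ℤ) := by
        have h0 : (0:ℤ) ≤ 2*((r:ℤ)-1) := by linarith
        exact mul_le_mul_of_nonneg_left hc1 h0
      linarith
    have hsum := Finset.sum_le_sum hper
    rw [hsum_deg, Finset.sum_add_distrib, Finset.sum_const, ← Finset.mul_sum,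
      hsum_card, hPr, nsmul_eq_mul] at hsum
    linarith
  -- transfer to ℚ and contradict h
  have hnQ : (1:ℚ) ≤ (Fintype.card V : ℚ) := by exact_mod_cast Fintype.card_pos
  have hrQ : (2:ℚ) ≤ (r:ℚ) := by exact_mod_cast hr
  rcases h with h | h
  · have hden : (0:ℚ) < (Fintype.card V : ℚ) + (r:ℚ)*((r:ℚ)-1) := by nlinarith
    rw [gt_iff_lt, div_lt_iff₀ hden] at h
    have key1Q : (k:ℚ) * ((Fintype.card V : ℚ) + (r:ℚ)*((r:ℚ)-1))
        + (r:ℚ)*((r:ℚ)-1)*((G.minDegree:ℚ)+2) ≤ 2 * (G.edgeFinset.card : ℚ) := by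
      exact_mod_cast key1
    linarith
  · have hden : (0:ℚ) < (Fintype.card V : ℚ) + 2*(r:ℚ)*((r:ℚ)-1) := by nlinarith
    rw [gt_iff_lt, div_lt_iff₀ hden] at h
    have key2Q : (k:ℚ) * ((Fintype.card V : ℚ) + 2*(r:ℚ)*((r:ℚ)-1))
        + 2*(r:ℚ)^2*((r:ℚ)-1) ≤ 2 * (G.edgeFinset.card : ℚ) := by
      exact_mod_cast key2
    linarith
end

section
/- Let Γ be a simple graph admitting a partition {V_1,...,V_r} of its vertex set into r ≥ 2 global defensive k-alliances. Then for each i, the number of edges of the subgraph induced by V_i is at least (1/2) γ_k^d(Γ) (r + k − 1). -/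
open Finset

/-- The number of edges of the subgraph of `G` induced by `S`, i.e. the number of edges of `G`
having both endpoints in `S`. -/
noncomputable def inducedEdgeCount {V : Type*} [Fintype V] [DecidableEq V] (G : SimpleGraph V)
    [DecidableRel G.Adj] (S : Finset V) : ℕ :=
  (@Finset.filter _ (fun e => ∀ v ∈ e, v ∈ S) (Classical.decPred _) G.edgeFinset).card

private def inducedGraph {V : Type*} [DecidableEq V] (G : SimpleGraph V) (S : Finset V) :
    SimpleGraph V where
  Adj a b := G.Adj a b ∧ a ∈ S ∧ b ∈ S
  symm := ⟨fun a b ⟨h, ha, hb⟩ => ⟨h.symm, hb, ha⟩⟩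
  loopless := ⟨fun a ⟨h, _, _⟩ => G.loopless.irrefl a h⟩

private instance {V : Type*} [DecidableEq V] (G : SimpleGraph V) [DecidableRel G.Adj]
    (S : Finset V) : DecidableRel (inducedGraph G S).Adj := fun _ _ => instDecidableAnd

private lemma sum_degIn_eq {V : Type*} [Fintype V] [DecidableEq V] (G : SimpleGraph V)
    [DecidableRel G.Adj] (S : Finset V) :
    ∑ v ∈ S, degIn G S v = 2 * inducedEdgeCount G S := by
  classical
  set G' := inducedGraph G S with hG'
  have hdeg : ∀ v ∈ S, G'.degree v = degIn G S v := by
    intro v hv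
    unfold SimpleGraph.degree degIn
    congr 1
    ext u
    simp [SimpleGraph.mem_neighborFinset, hG', inducedGraph, hv, and_comm]
  have hdeg0 : ∀ v ∉ S, G'.degree v = 0 := by
    intro v hv
    simp only [SimpleGraph.degree, Finset.card_eq_zero]
    ext u
    simp [SimpleGraph.mem_neighborFinset, hG', inducedGraph, hv]
  have hedges : G'.edgeFinset.card = inducedEdgeCount G S := by
    unfold inducedEdgeCount
    congr 1
    ext e
    induction e with
    | h a b =>
      simp only [SimpleGraph.mem_edgeFinset, Finset.mem_filter, SimpleGraph.mem_edgeSet]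
      constructor
      · rintro ⟨h, ha, hb⟩
        refine ⟨h, ?_⟩
        intro v hv
        rcases Sym2.mem_iff.mp hv with rfl | rfl
        · exact ha
        · exact hb
      · rintro ⟨h, hall⟩
        exact ⟨h, hall a (Sym2.mem_mk_left a b), hall b (Sym2.mem_mk_right a b)⟩
  have hsum := SimpleGraph.sum_degrees_eq_twice_card_edges G'
  rw [hedges] at hsum
  have : ∑ v, G'.degree v = ∑ v ∈ S, degIn G S v := by
    rw [← Finset.sum_subset (Finset.subset_univ S)]
    · exact Finset.sum_congr rfl hdeg
    · intro v _ hv; exact hdeg0 v hv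
  omega

/-- For a partition of `Γ` into `r ≥ 2` global defensive `k`-alliances, the size of the
subgraph induced by any part is at least `(1/2) γₖᵈ(Γ) (r + k - 1)`. -/
theorem statement9 {V : Type*} [Fintype V] [DecidableEq V]
    (G : SimpleGraph V) [DecidableRel G.Adj] (k : ℤ) (r : ℕ) (hr : 2 ≤ r)
    (P : Finpartition (univ : Finset V)) (hP : IsGlobalDefAlliancePartition G k P)
    (hPr : P.parts.card = r) :
    ∀ S ∈ P.parts,
      (1 / 2 : ℚ) * (globalDefAllianceNum G k : ℚ) * ((r : ℚ) + (k : ℚ) - 1) ≤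
        (inducedEdgeCount G S : ℚ) := by
  classical
  intro S hS
  obtain ⟨⟨hSne, hdef⟩, _⟩ := hP S hS
  -- γ ≤ |S|
  have hγ : globalDefAllianceNum G k ≤ S.card := by
    apply Nat.sInf_le
    exact ⟨S, hP S hS, rfl⟩
  -- every v ∈ S has degIn Sᶜ v ≥ r - 1
  have hdom : ∀ v ∈ S, (r - 1 : ℤ) ≤ (degIn G Sᶜ v : ℤ) := by
    intro v hv
    have hcard : (P.parts.erase S).card = r - 1 := by
      rw [Finset.card_erase_of_mem hS, hPr]
    have hle : (P.parts.erase S).card ≤ degIn G Sᶜ v := by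
      unfold degIn
      have hch : ∀ T : Finset V, ∃ u, T ∈ P.parts.erase S → (u ∈ T ∧ G.Adj v u) := by
        intro T
        by_cases hT : T ∈ P.parts.erase S
        · have hT' := Finset.mem_of_mem_erase hT
          have hTne := Finset.ne_of_mem_erase hT
          obtain ⟨_, hTdom⟩ := hP T hT'
          have hvT : v ∉ T := fun hvT => hTne (P.eq_of_mem_parts hT' hS hvT hv)
          obtain ⟨u, hu1, hu2⟩ := hTdom v hvT
          exact ⟨u, fun _ => ⟨hu1, hu2⟩⟩
        · exact ⟨v, fun h => absurd h hT⟩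
      choose f hf using hch
      have hf1 : ∀ T ∈ P.parts.erase S, f T ∈ T := fun T hT => (hf T hT).1
      have hf2 : ∀ T ∈ P.parts.erase S, G.Adj v (f T) := fun T hT => (hf T hT).2
      apply Finset.card_le_card_of_injOn f
      · intro T hT
        have hT' := Finset.mem_of_mem_erase hT
        have hTne := Finset.ne_of_mem_erase hT
        simp only [Finset.mem_coe, Finset.mem_filter, Finset.mem_compl]
        refine ⟨fun hfS => hTne (P.eq_of_mem_parts hT' hS (hf1 T hT) hfS), hf2 T hT⟩
      · intro T hT T' hT' heq
        exact P.eq_of_mem_parts (Finset.mem_of_mem_erase hT) (Finset.mem_of_mem_erase hT')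
          (hf1 T hT) (heq ▸ hf1 T' hT')
    have : (1 : ℕ) ≤ r := le_trans (by norm_num) hr
    omega
  -- degIn S v ≥ r - 1 + k for all v ∈ S
  have hdegS : ∀ v ∈ S, (r : ℤ) - 1 + k ≤ (degIn G S v : ℤ) := by
    intro v hv
    have := hdef v hv
    have := hdom v hv
    omega
  -- sum bound
  have hsum : (S.card : ℤ) * ((r : ℤ) - 1 + k) ≤ 2 * (inducedEdgeCount G S : ℤ) := by
    have h1 : (S.card : ℤ) * ((r : ℤ) - 1 + k) = ∑ v ∈ S, ((r : ℤ) - 1 + k) := by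
      rw [Finset.sum_const, nsmul_eq_mul]
    have h2 : ∑ v ∈ S, ((r : ℤ) - 1 + k) ≤ ∑ v ∈ S, (degIn G S v : ℤ) :=
      Finset.sum_le_sum hdegS
    have h3 : ∑ v ∈ S, (degIn G S v : ℤ) = 2 * (inducedEdgeCount G S : ℤ) := by
      have := sum_degIn_eq G S
      exact_mod_cast this
    omega
  -- pass to ℚ
  have hsumQ : (S.card : ℚ) * ((r : ℚ) + (k : ℚ) - 1) ≤ 2 * (inducedEdgeCount G S : ℚ) := by
    have := hsum
    have : ((S.card : ℤ) * ((r : ℤ) - 1 + k) : ℚ) ≤ ((2 * (inducedEdgeCount G S : ℤ) : ℤ) : ℚ) :=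
      by exact_mod_cast hsum
    push_cast at this
    linarith
  have hγQ : (globalDefAllianceNum G k : ℚ) ≤ (S.card : ℚ) := by exact_mod_cast hγ
  have hγ0 : (0 : ℚ) ≤ (globalDefAllianceNum G k : ℚ) := by positivity
  have hE0 : (0 : ℚ) ≤ (inducedEdgeCount G S : ℚ) := by positivity
  rcases le_or_gt 0 ((r : ℚ) + (k : ℚ) - 1) with hpos | hneg
  · nlinarith
  · nlinarith
end

section
/- Let Γ be a simple graph of order n with maximum degree Δ. If Γ is partitionable into global defensive k-alliances, then ψ_k^{gd}(Γ) ≤ Δ + 1 − i(Γ) − k. -/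
open Finset

/-- The isoperimetric number of `G`:
`i(G) = min { (∑_{v ∈ S} δ_{S̄}(v)) / |S| : ∅ ≠ S ⊆ V, |S| ≤ n/2 }`. -/
noncomputable def isoperimetricNumber {V : Type*} [Fintype V] [DecidableEq V]
    (G : SimpleGraph V) [DecidableRel G.Adj] : ℝ :=
  sInf {x : ℝ | ∃ S : Finset V, S.Nonempty ∧ 2 * S.card ≤ Fintype.card V ∧
    x = (∑ v ∈ S, (degIn G Sᶜ v : ℝ)) / (S.card : ℝ)}

/-- If `Γ` with maximum degree `Δ` is partitionable into global defensive `k`-alliances,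
then `ψₖᵍᵈ(Γ) ≤ Δ + 1 - i(Γ) - k`. -/
theorem statement11 {V : Type*} [Fintype V] [DecidableEq V]
    (G : SimpleGraph V) [DecidableRel G.Adj] (k : ℤ)
    (hpart : 2 ≤ globalDefPartitionNum G k) :
    (globalDefPartitionNum G k : ℝ) ≤
      (G.maxDegree : ℝ) + 1 - isoperimetricNumber G - (k : ℝ) := by
  classical
  have hmem : globalDefPartitionNum G k ∈
      {r : ℕ | ∃ P : Finpartition (univ : Finset V),
        IsGlobalDefAlliancePartition G k P ∧ P.parts.card = r} := by
    apply Nat.sSup_mem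
    · by_contra h
      rw [Set.not_nonempty_iff_eq_empty] at h
      have h0 : globalDefPartitionNum G k = 0 := by
        rw [globalDefPartitionNum, h]
        simp
      omega
    · refine ⟨Fintype.card V, fun x hx => ?_⟩
      obtain ⟨P, _, hc⟩ := hx
      have := P.card_parts_le_card
      simpa [hc, Finset.card_univ] using this
  obtain ⟨P, hP, hcard⟩ := hmem
  have hr2 : 2 ≤ P.parts.card := by omega
  have hne : P.parts.Nonempty := Finset.card_pos.mp (by omega)
  obtain ⟨S, hS, hSmin⟩ := Finset.exists_min_image P.parts Finset.card hne
  have hSne : S.Nonempty := (hP S hS).1.1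
  have hScard : 0 < S.card := Finset.card_pos.mpr hSne
  -- size bound: 2 * S.card ≤ Fintype.card V
  have hsum : ∑ T ∈ P.parts, T.card = Fintype.card V := by
    rw [P.sum_card_parts, Finset.card_univ]
  have hsize : 2 * S.card ≤ Fintype.card V := by
    have h1 : P.parts.card • S.card ≤ ∑ T ∈ P.parts, T.card :=
      Finset.card_nsmul_le_sum P.parts Finset.card S.card (fun T hT => hSmin T hT)
    have h2 : 2 * S.card ≤ P.parts.card * S.card :=
      Nat.mul_le_mul_right _ hr2
    simpa [smul_eq_mul, hsum] using le_trans h2 h1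
  -- per-vertex bound
  have hvertex : ∀ v ∈ S, (degIn G Sᶜ v : ℤ) ≤
      (G.maxDegree : ℤ) + 1 - (P.parts.card : ℤ) - k := by
    intro v hv
    -- v has a neighbor in every other part
    have hdomcount : P.parts.card - 1 ≤ degIn G Sᶜ v := by
      have key : (P.parts.erase S).card ≤ (Sᶜ.filter fun u => G.Adj v u).card := by
        have hch : ∀ T ∈ P.parts.erase S, ∃ u, u ∈ T ∧ G.Adj v u := by
          intro T hT
          have hTp := Finset.mem_of_mem_erase hT
          have hvT : v ∉ T := by
            intro hvt
            exact (Finset.ne_of_mem_erase hT)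
              (P.eq_of_mem_parts hTp hS hvt hv)
          obtain ⟨u, hu, hadj⟩ := (hP T hTp).2 v hvT
          exact ⟨u, hu, hadj⟩
        refine Finset.card_le_card_of_injOn
          (fun T => if h : ∃ u, u ∈ T ∧ G.Adj v u then h.choose else v) ?_ ?_
        · intro T hT
          have h := hch T hT
          simp only [dif_pos h]
          have hu := h.choose_spec
          have hTp := Finset.mem_of_mem_erase hT
          have huS : h.choose ∉ S := by
            intro hus
            exact (Finset.ne_of_mem_erase hT)
              (P.eq_of_mem_parts hTp hS hu.1 hus)
          simp [huS, hu.2]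
        · intro T1 h1 T2 h2 heq
          have hc1 := hch T1 h1
          have hc2 := hch T2 h2
          simp only [dif_pos hc1, dif_pos hc2] at heq
          have hu1 := hc1.choose_spec.1
          have hu2 := hc2.choose_spec.1
          rw [heq] at hu1
          exact P.eq_of_mem_parts (Finset.mem_of_mem_erase h1)
            (Finset.mem_of_mem_erase h2) hu1 hu2
      have : (P.parts.erase S).card = P.parts.card - 1 :=
        Finset.card_erase_of_mem hS
      unfold degIn
      omega
    have halli : (degIn G Sᶜ v : ℤ) + k ≤ (degIn G S v : ℤ) := (hP S hS).1.2 v hv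
    have hdeg : degIn G S v + degIn G Sᶜ v = G.degree v := by
      unfold degIn
      have huniv : (univ.filter fun u => G.Adj v u) = G.neighborFinset v := by
        ext u; simp [SimpleGraph.mem_neighborFinset]
      rw [SimpleGraph.degree, ← huniv, ← Finset.union_compl S, Finset.filter_union,
        Finset.card_union_of_disjoint]
      exact Finset.disjoint_filter_filter disjoint_compl_right
    have hmax : G.degree v ≤ G.maxDegree := G.degree_le_maxDegree v
    have h1 : (P.parts.card : ℤ) - 1 ≤ (degIn G Sᶜ v : ℤ) := by
      have := hdomcount; omega
    have h2 : (degIn G S v : ℤ) + (degIn G Sᶜ v : ℤ) ≤ (G.maxDegree : ℤ) := by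
      have := hdeg; omega
    linarith
  -- candidate isoperimetric quantity
  set x0 : ℝ := (∑ v ∈ S, (degIn G Sᶜ v : ℝ)) / (S.card : ℝ) with hx0
  have hx0mem : x0 ∈ {x : ℝ | ∃ S : Finset V, S.Nonempty ∧ 2 * S.card ≤ Fintype.card V ∧
      x = (∑ v ∈ S, (degIn G Sᶜ v : ℝ)) / (S.card : ℝ)} :=
    ⟨S, hSne, hsize, rfl⟩
  have hbdd : BddBelow {x : ℝ | ∃ S : Finset V, S.Nonempty ∧ 2 * S.card ≤ Fintype.card V ∧
      x = (∑ v ∈ S, (degIn G Sᶜ v : ℝ)) / (S.card : ℝ)} := by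
    refine ⟨0, fun x hx => ?_⟩
    obtain ⟨T, hTne, _, rfl⟩ := hx
    positivity
  have hiso : isoperimetricNumber G ≤ x0 := csInf_le hbdd hx0mem
  have hx0le : x0 ≤ (G.maxDegree : ℝ) + 1 - (P.parts.card : ℝ) - (k : ℝ) := by
    rw [hx0, div_le_iff₀ (by exact_mod_cast hScard)]
    calc ∑ v ∈ S, (degIn G Sᶜ v : ℝ)
        ≤ ∑ _v ∈ S, ((G.maxDegree : ℝ) + 1 - (P.parts.card : ℝ) - (k : ℝ)) := by
          refine Finset.sum_le_sum fun v hv => ?_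
          have := hvertex v hv
          push_cast
          exact_mod_cast this
      _ = ((G.maxDegree : ℝ) + 1 - (P.parts.card : ℝ) - (k : ℝ)) * (S.card : ℝ) := by
          rw [Finset.sum_const, nsmul_eq_mul]; ring
  have hrcast : (globalDefPartitionNum G k : ℝ) = (P.parts.card : ℝ) := by
    rw [hcard]
  rw [hrcast]
  linarith
end

section
/- Let Γ be a simple graph of order n. If Γ is partitionable into defensive k-alliances (i.e., ψ_k^d(Γ) ≥ 2), then a_k^d(Γ) ≥ i(Γ) + k + 1. -/
open Finset

/-- If `Γ` is partitionable into defensive `k`-alliances (`ψₖᵈ(Γ) ≥ 2`), then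
`aₖᵈ(Γ) ≥ i(Γ) + k + 1`. -/
theorem statement12 {V : Type*} [Fintype V] [DecidableEq V]
    (G : SimpleGraph V) [DecidableRel G.Adj] (k : ℤ)
    (hpart : 2 ≤ defPartitionNum G k) :
    isoperimetricNumber G + (k : ℝ) + 1 ≤ (defAllianceNum G k : ℝ) := by
  classical
  -- The partition set is nonempty (else sSup = 0 < 2)
  set PS := {r : ℕ | ∃ P : Finpartition (univ : Finset V),
    IsDefAlliancePartition G k P ∧ P.parts.card = r} with hPS
  have hPSne : PS.Nonempty := by
    by_contra h
    rw [Set.not_nonempty_iff_eq_empty] at h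
    simp [defPartitionNum, ← hPS, h] at hpart
  have hPSbdd : BddAbove PS := by
    refine ⟨Fintype.card (Finset V), ?_⟩
    rintro r ⟨P, -, rfl⟩
    exact Finset.card_le_univ _
  have hmem : defPartitionNum G k ∈ PS := Nat.sSup_mem hPSne hPSbdd
  obtain ⟨P, hPall, hPcard⟩ := hmem
  rw [← hPcard] at hpart
  -- two distinct parts
  obtain ⟨T₁, hT₁, T₂, hT₂, hne⟩ := Finset.one_lt_card.mp (by omega : 1 < P.parts.card)
  have hdisj : Disjoint T₁ T₂ := P.disjoint hT₁ hT₂ hne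
  have hsum : T₁.card + T₂.card ≤ Fintype.card V := by
    rw [← Finset.card_union_of_disjoint hdisj]
    simpa using Finset.card_le_univ (T₁ ∪ T₂)
  -- the alliance number set is nonempty; get a minimum alliance S
  have hAne : {s : ℕ | ∃ S : Finset V, IsDefensiveAlliance G k S ∧ S.card = s}.Nonempty :=
    ⟨T₁.card, T₁, hPall T₁ hT₁, rfl⟩
  have hAmem : defAllianceNum G k ∈
      {s : ℕ | ∃ S : Finset V, IsDefensiveAlliance G k S ∧ S.card = s} :=
    Nat.sInf_mem hAne
  obtain ⟨S, hSall, hScard⟩ := hAmem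
  have hle1 : defAllianceNum G k ≤ T₁.card := Nat.sInf_le ⟨T₁, hPall T₁ hT₁, rfl⟩
  have hle2 : defAllianceNum G k ≤ T₂.card := Nat.sInf_le ⟨T₂, hPall T₂ hT₂, rfl⟩
  have hhalf : 2 * S.card ≤ Fintype.card V := by omega
  obtain ⟨hSne, hSdef⟩ := hSall
  have hSpos : 0 < S.card := Finset.card_pos.mpr hSne
  -- bound on degIn G S v
  have hbound : ∀ v ∈ S, (degIn G Sᶜ v : ℤ) ≤ (S.card : ℤ) - 1 - k := by
    intro v hv
    have h1 : degIn G S v ≤ (S.erase v).card := by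
      apply Finset.card_le_card
      intro u hu
      simp only [Finset.mem_filter] at hu
      exact Finset.mem_erase.mpr ⟨fun h => (G.irrefl (h ▸ hu.2)), hu.1⟩
    rw [Finset.card_erase_of_mem hv] at h1
    have h2 := hSdef v hv
    have h3 : ((S.card - 1 : ℕ) : ℤ) = (S.card : ℤ) - 1 := by
      rw [Nat.cast_sub hSpos]; norm_num
    have h4 : (degIn G S v : ℤ) ≤ (S.card : ℤ) - 1 := by
      rw [← h3]; exact_mod_cast h1
    omega
  -- the isoperimetric value of S
  have hxmem : (∑ v ∈ S, (degIn G Sᶜ v : ℝ)) / (S.card : ℝ) ∈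
      {x : ℝ | ∃ S : Finset V, S.Nonempty ∧ 2 * S.card ≤ Fintype.card V ∧
        x = (∑ v ∈ S, (degIn G Sᶜ v : ℝ)) / (S.card : ℝ)} :=
    ⟨S, hSne, hhalf, rfl⟩
  have hbdd : BddBelow {x : ℝ | ∃ S : Finset V, S.Nonempty ∧ 2 * S.card ≤ Fintype.card V ∧
      x = (∑ v ∈ S, (degIn G Sᶜ v : ℝ)) / (S.card : ℝ)} := by
    refine ⟨0, ?_⟩
    rintro x ⟨T, hTne, -, rfl⟩
    positivity
  have hi_le : isoperimetricNumber G ≤ (∑ v ∈ S, (degIn G Sᶜ v : ℝ)) / (S.card : ℝ) :=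
    csInf_le hbdd hxmem
  have hcardpos : (0 : ℝ) < (S.card : ℝ) := by exact_mod_cast hSpos
  have hsum_le : (∑ v ∈ S, (degIn G Sᶜ v : ℝ)) ≤ (S.card : ℝ) * ((S.card : ℝ) - 1 - k) := by
    calc (∑ v ∈ S, (degIn G Sᶜ v : ℝ)) ≤ ∑ v ∈ S, ((S.card : ℝ) - 1 - k) := by
          apply Finset.sum_le_sum
          intro v hv
          exact_mod_cast hbound v hv
      _ = (S.card : ℝ) * ((S.card : ℝ) - 1 - k) := by
          rw [Finset.sum_const, nsmul_eq_mul]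
  have hdiv : (∑ v ∈ S, (degIn G Sᶜ v : ℝ)) / (S.card : ℝ) ≤ (S.card : ℝ) - 1 - k := by
    rw [div_le_iff₀ hcardpos]
    linarith [hsum_le]
  have : isoperimetricNumber G ≤ (S.card : ℝ) - 1 - k := le_trans hi_le hdiv
  have : isoperimetricNumber G + (k : ℝ) + 1 ≤ (S.card : ℝ) := by linarith
  rw [← hScard]
  exact_mod_cast this
end
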